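/- arXiv:1805.05434 — 3 statements merged into one kernel-verified Lean document; each statement's English description precedes it below -/
import Mathlib

section
/- Let a > β_U > 0, 0 < σ < τ, and let δ_∞ = z₂ + σ + ln((a - β_U(1-e^{-σ}))/a) and T̃ = z₂ + τ. Then the period T^{(∞)} := T̃ - δ_∞ of the rapidly oscillating unstable periodic solution satisfies τ - σ < T^{(∞)} < τ. -/
theorem rapid_period_bounds (βU a σ τ z₂ : ℝ) (hβU : βU > 0) (ha : a > βU)
    (hσ0 : 0 < σ) (hστ : σ < τ) :
    let δinf : ℝ := z₂ + σ + Real.log ((a - βU * (1 - Real.exp (-σ))) / a)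
    let T : ℝ := z₂ + τ
    τ - σ < T - δinf ∧ T - δinf < τ := by
  intro δinf T
  have ha0 : (0:ℝ) < a := lt_trans hβU ha
  have he1 : Real.exp (-σ) < 1 := Real.exp_lt_one_iff.mpr (by linarith)
  have he0 : 0 < Real.exp (-σ) := Real.exp_pos _
  set x : ℝ := a - βU * (1 - Real.exp (-σ)) with hx
  have hx0 : 0 < x := by nlinarith
  have hxa : x < a := by nlinarith
  have hxlow : a * Real.exp (-σ) < x := by nlinarith
  have hlogneg : Real.log (x / a) < 0 :=
    Real.log_neg (div_pos hx0 ha0) ((div_lt_one ha0).mpr hxa)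
  have hloggt : -σ < Real.log (x / a) := by
    have : Real.exp (-σ) < x / a := (lt_div_iff₀ ha0).mpr (by linarith [hxlow])
    calc -σ = Real.log (Real.exp (-σ)) := (Real.log_exp _).symm
      _ < Real.log (x / a) := Real.log_lt_log he0 this
  constructor <;> simp only [δinf, T] <;> linarith
end

section
/- Let a > β_U > 0, 0 < σ < τ, δ_∞ = z₂ + σ + ln((a - β_U(1-e^{-σ}))/a). Define the rapid-cycle minimum x̲^{(Δ)} := β_U(e^{-(δ_∞ - z₂)} - 1) and the limit-cycle minimum x̲ := -β_U(1 - e^{-τ}). Then x̲^{(Δ)} > x̲. -/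
theorem rapid_min_gt_slow_min (βU a σ τ z₂ : ℝ) (hβU : βU > 0) (ha : a > βU)
    (hσ0 : 0 < σ) (hστ : σ < τ) :
    let δinf : ℝ := z₂ + σ + Real.log ((a - βU * (1 - Real.exp (-σ))) / a)
    βU * (Real.exp (-(δinf - z₂)) - 1) > -βU * (1 - Real.exp (-τ)) := by
  intro δinf
  have h1 : Real.exp (-σ) < 1 := Real.exp_lt_one_iff.mpr (by linarith)
  have h2 : 0 < Real.exp (-σ) := Real.exp_pos _
  have ha0 : 0 < a := by linarith
  have hd : 0 < a - βU * (1 - Real.exp (-σ)) := by nlinarith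
  have hq : (a - βU * (1 - Real.exp (-σ))) / a < 1 := by
    rw [div_lt_one ha0]; nlinarith
  have hq0 : 0 < (a - βU * (1 - Real.exp (-σ))) / a := div_pos hd ha0
  have hlog : Real.log ((a - βU * (1 - Real.exp (-σ))) / a) < 0 := Real.log_neg hq0 hq
  have hlt : -τ < -(δinf - z₂) := by simp only [δinf]; linarith
  have hexp : Real.exp (-τ) < Real.exp (-(δinf - z₂)) := Real.exp_lt_exp.mpr hlt
  nlinarith [hexp]
end

section
/- Let a = β_L + β_U with β_L, β_U > 0, 0 < σ < τ, and δ_∞ = z₂ + σ + ln((a - β_U(1-e^{-σ}))/a). Define x̄^{(Δ)} := a(1 - e^{-σ}) + β_U(e^{z₂ - δ_∞ - σ} - 1) and x̄ := β_L(1 - e^{-τ}). Then x̄^{(Δ)} < x̄. -/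
theorem rapid_max_lt_slow_max (βU βL σ τ z₂ : ℝ) (hβU : βU > 0) (hβL : βL > 0)
    (hσ0 : 0 < σ) (hστ : σ < τ) :
    let a : ℝ := βL + βU
    let δinf : ℝ := z₂ + σ + Real.log ((a - βU * (1 - Real.exp (-σ))) / a)
    a * (1 - Real.exp (-σ)) + βU * (Real.exp (z₂ - δinf - σ) - 1)
      < βL * (1 - Real.exp (-τ)) := by
  intro a δinf
  set E := Real.exp (-σ) with hEdef
  have hE : 0 < E := Real.exp_pos _
  have hE1 : E < 1 := by
    rw [hEdef]
    exact Real.exp_lt_one_iff.mpr (by linarith)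
  have ha : (0:ℝ) < a := by simp only [a]; linarith
  have hD : (0:ℝ) < βL + βU * E := by positivity
  have hDa : a - βU * (1 - E) = βL + βU * E := by simp only [a]; ring
  have hexp : Real.exp (z₂ - δinf - σ) = E ^ 2 * a / (βL + βU * E) := by
    have h1 : z₂ - δinf - σ = (-σ) + (-σ) - Real.log ((βL + βU * E) / a) := by
      simp only [δinf, ← hEdef, hDa]; ring
    rw [h1, Real.exp_sub, Real.exp_add, Real.exp_log (by positivity), ← hEdef,
      div_div_eq_mul_div]
    ring
  rw [hexp]
  have key : a * (1 - E) + βU * (E ^ 2 * a / (βL + βU * E) - 1)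
      = βL * (1 - a * E / (βL + βU * E)) := by
    field_simp
    simp only [a]
    ring
  rw [key]
  have hτ : Real.exp (-τ) < E := by
    rw [hEdef]
    exact Real.exp_lt_exp.mpr (by linarith)
  have h2 : Real.exp (-τ) < a * E / (βL + βU * E) := by
    rw [lt_div_iff₀ hD]
    have hEτ : 0 < Real.exp (-τ) := Real.exp_pos _
    have h3 : a = βL + βU := rfl
    nlinarith [mul_lt_mul_of_pos_right hτ hβL, mul_lt_mul_of_pos_right hτ (mul_pos hβU hE),
      mul_pos hβU (mul_pos hE (sub_pos.mpr hE1))]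
  nlinarith
end
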